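/- Let N ≥ 1 and −1 < δ < 1, with t⁺ = (1+δ)/2 and t⁻ = (1−δ)/2. The (2N+1)×(2N+1) symmetric tridiagonal matrix H with zero diagonal and off-diagonal entries alternating t⁺, t⁻, t⁺, t⁻, … (so H_{2x−1,2x} = t⁺ and H_{2x,2x+1} = t⁻ in 1-based indexing for x = 1,…,N) has eigenvalues 0 and ±√(((1−δ²)/2) cos(kπ/(N+1)) + (1+δ²)/2) for k = 1, …, N, and these are all 2N+1 of its eigenvalues. -/

import Mathlib

open Real

noncomputable def sshw (tp tm θ μ : ℝ) (n : ℕ) : ℝ :=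
  if Even n then tm * Real.sin ((n/2 : ℕ) * θ) + tp * Real.sin (((n/2 : ℕ)+1) * θ)
  else μ * Real.sin ((((n+1)/2 : ℕ)) * θ)

lemma sshw_even (tp tm θ μ : ℝ) (m : ℕ) :
    sshw tp tm θ μ (2*m) = tm * Real.sin (m * θ) + tp * Real.sin ((m+1) * θ) := by
  simp [sshw, Nat.mul_div_cancel_left m (by norm_num : 0 < 2)]

lemma sshw_odd (tp tm θ μ : ℝ) (m : ℕ) :
    sshw tp tm θ μ (2*m+1) = μ * Real.sin ((m+1) * θ) := by
  have h1 : ¬ Even (2*m+1) := by simp [Nat.even_add_one, Nat.even_mul]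
  have h2 : (2*m+1+1)/2 = m+1 := by omega
  simp [sshw, h1, h2]


lemma tridiag_mulVec {n : ℕ} (t : ℕ → ℝ) (H : Matrix (Fin n) (Fin n) ℝ)
    (hH : ∀ i j, H i j = if (i:ℕ)+1 = (j:ℕ) then t (i:ℕ) else if (j:ℕ)+1 = (i:ℕ) then t ((j:ℕ)) else 0)
    (v : Fin n → ℝ) (i : Fin n) :
    H.mulVec v i = (if h : (i:ℕ)+1 < n then t (i:ℕ) * v ⟨(i:ℕ)+1, h⟩ else 0)
      + (if h : 0 < (i:ℕ) then t ((i:ℕ)-1) * v ⟨(i:ℕ)-1, Nat.lt_of_le_of_lt (Nat.sub_le _ _) i.isLt⟩ else 0) := by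
  classical
  have key : ∀ j : Fin n, H i j * v j =
      (if (i:ℕ)+1 = (j:ℕ) then t (i:ℕ) * v j else 0)
      + (if (j:ℕ)+1 = (i:ℕ) then t ((j:ℕ)) * v j else 0) := by
    intro j
    rw [hH]
    by_cases h1 : (i:ℕ)+1 = (j:ℕ)
    · have h2 : ¬ ((j:ℕ)+1 = (i:ℕ)) := by omega
      simp [h1, h2]
    · by_cases h2 : (j:ℕ)+1 = (i:ℕ) <;> simp [h1, h2]
  have sum1 : ∑ j : Fin n, (if (i:ℕ)+1 = (j:ℕ) then t (i:ℕ) * v j else 0)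
      = if h : (i:ℕ)+1 < n then t (i:ℕ) * v ⟨(i:ℕ)+1, h⟩ else 0 := by
    by_cases h : (i:ℕ)+1 < n
    · rw [dif_pos h]
      have : ∀ j : Fin n, ((i:ℕ)+1 = (j:ℕ)) = ((⟨(i:ℕ)+1, h⟩ : Fin n) = j) := by
        intro j; rw [Fin.ext_iff]
      simp only [this]
      rw [Finset.sum_ite_eq]
      simp
    · rw [dif_neg h]
      apply Finset.sum_eq_zero
      intro j _
      rw [if_neg]
      intro hc
      exact h (hc ▸ j.isLt)
  have sum2 : ∑ j : Fin n, (if (j:ℕ)+1 = (i:ℕ) then t ((j:ℕ)) * v j else 0)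
      = if h : 0 < (i:ℕ) then t ((i:ℕ)-1) * v ⟨(i:ℕ)-1, Nat.lt_of_le_of_lt (Nat.sub_le _ _) i.isLt⟩ else 0 := by
    by_cases h : 0 < (i:ℕ)
    · rw [dif_pos h]
      have hlt : (i:ℕ)-1 < n := Nat.lt_of_le_of_lt (Nat.sub_le _ _) i.isLt
      have : ∀ j : Fin n, ((j:ℕ)+1 = (i:ℕ)) = ((⟨(i:ℕ)-1, hlt⟩ : Fin n) = j) := by
        intro j; rw [Fin.ext_iff]; simp only [eq_iff_iff]; constructor
        · intro hj; omega
        · intro hj; omega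
      simp only [this]
      rw [Finset.sum_ite_eq]
      simp
    · rw [dif_neg h]
      apply Finset.sum_eq_zero
      intro j _
      rw [if_neg]
      omega
  calc H.mulVec v i = ∑ j : Fin n, H i j * v j := by
        simp [Matrix.mulVec, dotProduct]
    _ = _ := by rw [Finset.sum_congr rfl (fun j _ => key j), Finset.sum_add_distrib, sum1, sum2]

lemma sin_three_term (θ : ℝ) (x : ℝ) :
    Real.sin ((x+2) * θ) + Real.sin (x * θ) = 2 * Real.sin ((x+1) * θ) * Real.cos θ := by
  have h1 : (x+2) * θ = (x+1)*θ + θ := by ring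
  have h2 : x * θ = (x+1)*θ - θ := by ring
  rw [h1, h2, Real.sin_add, Real.sin_sub]; ring

lemma ssh_recur (N : ℕ) (tp tm θ μ : ℝ)
    (hμ : μ^2 = tp^2 + tm^2 + 2*tp*tm*Real.cos θ)
    (hsin : Real.sin (((N:ℝ)+1) * θ) = 0) (n : ℕ) (hn : n < 2*N+1) :
    (if _h : n+1 < 2*N+1 then (if Even n then tp else tm) * sshw tp tm θ μ (n+1) else 0)
    + (if _h : 0 < n then (if Even (n-1) then tp else tm) * sshw tp tm θ μ (n-1) else 0)
    = μ * sshw tp tm θ μ n := by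
  rcases Nat.even_or_odd n with ⟨m, hm⟩ | ⟨m, hm⟩
  · have hm' : n = 2*m := by omega
    subst hm'
    have hev : Even (2*m) := ⟨m, by ring⟩
    by_cases hm0 : m = 0
    · subst hm0
      by_cases hN0 : N = 0
      · subst hN0
        rw [dif_neg (by omega), dif_neg (by omega), sshw_even]
        have hs : Real.sin θ = 0 := by
          have : ((0:ℕ):ℝ) + 1 = 1 := by norm_num
          rw [this, one_mul] at hsin
          exact hsin
        have h4 : Real.sin (((0:ℕ):ℝ) * θ) = 0 := by norm_num
        have h5 : Real.sin ((((0:ℕ):ℝ)+1) * θ) = 0 := by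
          rw [show (((0:ℕ):ℝ)+1) * θ = θ by push_cast; ring]; exact hs
        rw [h4, h5]
        ring
      · rw [dif_pos (by omega), dif_neg (by omega), if_pos hev, sshw_odd tp tm θ μ 0, sshw_even]
        have h4 : Real.sin (((0:ℕ):ℝ) * θ) = 0 := by norm_num
        rw [h4]
        ring
    · by_cases hmN : m = N
      · subst hmN
        rw [dif_neg (by omega), dif_pos (by omega)]
        have h1 : 2*m-1 = 2*(m-1)+1 := by omega
        have h2 : ¬ Even (2*m-1) := by rw [h1]; simp [Nat.even_add_one, Nat.even_mul]
        rw [if_neg h2, h1, sshw_odd, sshw_even]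
        have h3 : ((m-1 : ℕ) : ℝ) + 1 = (m:ℝ) := by
          have : (1:ℕ) ≤ m := by omega
          push_cast [this]
          ring
        rw [h3, hsin]
        ring
      · have hlt : 2*m+1 < 2*N+1 := by omega
        rw [dif_pos hlt, dif_pos (by omega), if_pos hev]
        have h1 : 2*m-1 = 2*(m-1)+1 := by omega
        have h2 : ¬ Even (2*m-1) := by rw [h1]; simp [Nat.even_add_one, Nat.even_mul]
        rw [if_neg h2, h1, sshw_odd, sshw_odd, sshw_even]
        have h3 : ((m-1 : ℕ) : ℝ) + 1 = (m:ℝ) := by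
          have : (1:ℕ) ≤ m := by omega
          push_cast [this]
          ring
        rw [h3]
        ring
  · subst hm
    have hmN : m < N := by omega
    have hod : ¬ Even (2*m+1) := by simp [Nat.even_add_one, Nat.even_mul]
    rw [dif_pos (by omega), dif_pos (by omega), if_neg hod]
    have h1 : 2*m+1+1 = 2*(m+1) := by ring
    have h2 : 2*m+1-1 = 2*m := by omega
    have h3 : Even (2*m) := ⟨m, by ring⟩
    rw [h1, h2, if_pos h3, sshw_even, sshw_even, sshw_odd]
    have key := sin_three_term θ (m:ℝ)
    push_cast
    rw [show ((m:ℝ)+1+1)*θ = ((m:ℝ)+2)*θ by ring]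
    linear_combination (-Real.sin (((m:ℝ)+1)*θ)) * hμ + tm*tp*key

lemma ssh_mulVec (N : ℕ) (tp tm θ μ : ℝ)
    (H : Matrix (Fin (2*N+1)) (Fin (2*N+1)) ℝ)
    (hH : ∀ i j, H i j = if (i:ℕ)+1=(j:ℕ) then (if Even (i:ℕ) then tp else tm)
      else if (j:ℕ)+1=(i:ℕ) then (if Even (j:ℕ) then tp else tm) else 0)
    (hμ : μ^2 = tp^2 + tm^2 + 2*tp*tm*Real.cos θ)
    (hsin : Real.sin (((N:ℝ)+1) * θ) = 0) :
    H.mulVec (fun i : Fin (2*N+1) => sshw tp tm θ μ (i:ℕ))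
      = μ • (fun i : Fin (2*N+1) => sshw tp tm θ μ (i:ℕ)) := by
  funext i
  rw [tridiag_mulVec (fun j => if Even j then tp else tm) H (fun a b => hH a b)]
  exact ssh_recur N tp tm θ μ hμ hsin (i:ℕ) i.isLt

noncomputable def sshz (tp tm : ℝ) (n : ℕ) : ℝ := if Even n then (-tp/tm)^(n/2) else 0

lemma ssh_recur0 (N : ℕ) (tp tm : ℝ) (htm : tm ≠ 0) (n : ℕ) (hn : n < 2*N+1) :
    (if _h : n+1 < 2*N+1 then (if Even n then tp else tm) * sshz tp tm (n+1) else 0)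
    + (if _h : 0 < n then (if Even (n-1) then tp else tm) * sshz tp tm (n-1) else 0)
    = (0:ℝ) * sshz tp tm n := by
  rcases Nat.even_or_odd n with ⟨m, hm⟩ | ⟨m, hm⟩
  · have hm' : n = 2*m := by omega
    subst hm'
    have e1 : ¬ Even (2*m+1) := by rw [Nat.even_iff]; omega
    have z1 : sshz tp tm (2*m+1) = 0 := by simp [sshz, e1]
    by_cases h0 : 0 < 2*m
    · have e2 : ¬ Even (2*m-1) := by rw [Nat.even_iff]; omega
      have z2 : sshz tp tm (2*m-1) = 0 := by simp [sshz, e2]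
      by_cases h1 : 2*m+1 < 2*N+1
      · rw [dif_pos h1, dif_pos h0, z1, z2]; ring
      · rw [dif_neg h1, dif_pos h0, z2]; ring
    · by_cases h1 : 2*m+1 < 2*N+1
      · rw [dif_pos h1, dif_neg h0, z1]; ring
      · rw [dif_neg h1, dif_neg h0]; ring
  · subst hm
    have h1 : 2*m+1+1 = 2*(m+1) := by ring
    have h2 : 2*m+1-1 = 2*m := by omega
    have e1 : ¬ Even (2*m+1) := by rw [Nat.even_iff]; omega
    have e2 : Even (2*m) := ⟨m, by ring⟩
    have e3 : Even (2*(m+1)) := ⟨m+1, by ring⟩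
    rw [dif_pos (by omega), dif_pos (by omega), h1, h2, if_neg e1, if_pos e2]
    have z2 : sshz tp tm (2*(m+1)) = (-tp/tm)^(m+1) := by
      simp [sshz, e3, Nat.mul_div_cancel_left (m+1) (by norm_num : 0 < 2)]
    have z3 : sshz tp tm (2*m) = (-tp/tm)^m := by
      simp [sshz, e2, Nat.mul_div_cancel_left m (by norm_num : 0 < 2)]
    rw [z2, z3, pow_succ]
    field_simp
    ring

lemma ssh_mulVec0 (N : ℕ) (tp tm : ℝ) (htm : tm ≠ 0)
    (H : Matrix (Fin (2*N+1)) (Fin (2*N+1)) ℝ)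
    (hH : ∀ i j, H i j = if (i:ℕ)+1=(j:ℕ) then (if Even (i:ℕ) then tp else tm)
      else if (j:ℕ)+1=(i:ℕ) then (if Even (j:ℕ) then tp else tm) else 0) :
    H.mulVec (fun i : Fin (2*N+1) => sshz tp tm (i:ℕ))
      = (0:ℝ) • (fun i : Fin (2*N+1) => sshz tp tm (i:ℕ)) := by
  funext i
  rw [tridiag_mulVec (fun j => if Even j then tp else tm) H (fun a b => hH a b)]
  exact ssh_recur0 N tp tm htm (i:ℕ) i.isLt


section AUX
variable (N : ℕ) (δ : ℝ)

-- positivity of the sqrt argument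
lemma ssh_arg_pos (hδ1 : -1 < δ) (hδ2 : δ < 1) (k : ℕ) (h1 : 1 ≤ k) (h2 : k ≤ N) :
    0 < (1 - δ ^ 2) / 2 * Real.cos (k * π / (N + 1)) + (1 + δ ^ 2) / 2 := by
  have hδsq : δ^2 < 1 := by nlinarith
  have hN1 : (0:ℝ) < (N:ℝ) + 1 := by positivity
  have hθ1 : 0 < (k:ℝ) * π / (N + 1) := by
    have : (0:ℝ) < (k:ℝ) := by exact_mod_cast h1
    positivity
  have hθ2 : (k:ℝ) * π / (N + 1) < π := by
    rw [div_lt_iff₀ hN1]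
    have hk : (k:ℝ) < (N:ℝ)+1 := by exact_mod_cast Nat.lt_succ_of_le h2
    nlinarith [Real.pi_pos]
  have hc : -1 < Real.cos ((k:ℝ) * π / (N + 1)) := by
    have := Real.strictAntiOn_cos (Set.mem_Icc.mpr ⟨le_of_lt hθ1, le_of_lt hθ2⟩)
      (Set.mem_Icc.mpr ⟨Real.pi_nonneg, le_refl π⟩) hθ2
    rwa [Real.cos_pi] at this
  nlinarith

lemma ssh_theta_mem (k : ℕ) (h1 : 1 ≤ k) (h2 : k ≤ N) :
    0 < (k:ℝ) * π / (N + 1) ∧ (k:ℝ) * π / (N + 1) < π := by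
  have hN1 : (0:ℝ) < (N:ℝ) + 1 := by positivity
  constructor
  · have : (0:ℝ) < (k:ℝ) := by exact_mod_cast h1
    positivity
  · rw [div_lt_iff₀ hN1]
    have hk : (k:ℝ) < (N:ℝ)+1 := by exact_mod_cast Nat.lt_succ_of_le h2
    nlinarith [Real.pi_pos]

-- strict anti-monotonicity of the energies
lemma ssh_E_anti (hδ1 : -1 < δ) (hδ2 : δ < 1) (k l : ℕ) (h1 : 1 ≤ k) (hkl : k < l) (h2 : l ≤ N) :
    Real.sqrt ((1 - δ ^ 2) / 2 * Real.cos (l * π / (N + 1)) + (1 + δ ^ 2) / 2)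
    < Real.sqrt ((1 - δ ^ 2) / 2 * Real.cos (k * π / (N + 1)) + (1 + δ ^ 2) / 2) := by
  have hδsq : δ^2 < 1 := by nlinarith
  have hN1 : (0:ℝ) < (N:ℝ) + 1 := by positivity
  obtain ⟨ha1, ha2⟩ := ssh_theta_mem N k h1 (le_of_lt (lt_of_lt_of_le hkl h2))
  obtain ⟨hb1, hb2⟩ := ssh_theta_mem N l (le_trans h1 (le_of_lt hkl)) h2
  have hlt : (k:ℝ) * π / (N + 1) < (l:ℝ) * π / (N + 1) := by
    have hk : (k:ℝ) < (l:ℝ) := by exact_mod_cast hkl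
    have := Real.pi_pos
    gcongr
  have hcos : Real.cos ((l:ℝ) * π / (N + 1)) < Real.cos ((k:ℝ) * π / (N + 1)) :=
    Real.strictAntiOn_cos (Set.mem_Icc.mpr ⟨le_of_lt ha1, le_of_lt ha2⟩)
      (Set.mem_Icc.mpr ⟨le_of_lt hb1, le_of_lt hb2⟩) hlt
  apply Real.sqrt_lt_sqrt (le_of_lt (ssh_arg_pos N δ hδ1 hδ2 l (by omega) h2))
  nlinarith

end AUX

lemma ssh_card (N : ℕ) (hN : 1 ≤ N) (δ : ℝ) (hδ1 : -1 < δ) (hδ2 : δ < 1) :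
    ∃ F : Finset ℝ,
      ({0} ∪ {μ : ℝ | ∃ k : ℕ, 1 ≤ k ∧ k ≤ N ∧
        (μ = Real.sqrt ((1 - δ ^ 2) / 2 * Real.cos (k * π / (N + 1)) + (1 + δ ^ 2) / 2) ∨
         μ = -Real.sqrt ((1 - δ ^ 2) / 2 * Real.cos (k * π / (N + 1)) + (1 + δ ^ 2) / 2))} :
          Set ℝ) = ↑F ∧ F.card = 2 * N + 1 := by
  classical
  set E : ℕ → ℝ := fun k =>
    Real.sqrt ((1 - δ ^ 2) / 2 * Real.cos (k * π / (N + 1)) + (1 + δ ^ 2) / 2) with hE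
  have hEpos : ∀ k, 1 ≤ k → k ≤ N → 0 < E k := fun k h1 h2 =>
    Real.sqrt_pos.mpr (ssh_arg_pos N δ hδ1 hδ2 k h1 h2)
  have hEinj : Set.InjOn E ↑(Finset.Icc 1 N) := by
    intro a ha b hb hab
    simp only [Finset.coe_Icc, Set.mem_Icc] at ha hb
    by_contra hne
    rcases lt_or_gt_of_ne hne with h | h
    · exact absurd hab (ne_of_gt (ssh_E_anti N δ hδ1 hδ2 a b ha.1 h hb.2))
    · exact absurd hab.symm (ne_of_gt (ssh_E_anti N δ hδ1 hδ2 b a hb.1 h ha.2))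
  have hEinj' : Set.InjOn (fun k => -E k) ↑(Finset.Icc 1 N) := by
    intro a ha b hb hab
    exact hEinj ha hb (by simpa using neg_inj.mp hab)
  refine ⟨insert 0 ((Finset.Icc 1 N).image E ∪ (Finset.Icc 1 N).image (fun k => -E k)), ?_, ?_⟩
  · ext μ
    simp only [Set.mem_union, Set.mem_singleton_iff, Set.mem_setOf_eq, Finset.coe_insert,
      Set.mem_insert_iff, Finset.coe_union, Finset.coe_image, Finset.coe_Icc, Set.mem_image,
      Set.mem_Icc]
    constructor
    · rintro (h | ⟨k, h1, h2, h3 | h3⟩)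
      · exact Or.inl h
      · exact Or.inr (Or.inl ⟨k, ⟨h1, h2⟩, h3.symm⟩)
      · exact Or.inr (Or.inr ⟨k, ⟨h1, h2⟩, h3.symm⟩)
    · rintro (h | ⟨k, ⟨h1, h2⟩, h3⟩ | ⟨k, ⟨h1, h2⟩, h3⟩)
      · exact Or.inl h
      · exact Or.inr ⟨k, h1, h2, Or.inl h3.symm⟩
      · exact Or.inr ⟨k, h1, h2, Or.inr h3.symm⟩
  · have h0 : (0:ℝ) ∉ (Finset.Icc 1 N).image E ∪ (Finset.Icc 1 N).image (fun k => -E k) := by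
      simp only [Finset.mem_union, Finset.mem_image, Finset.mem_Icc, not_or, not_exists]
      constructor
      · rintro k ⟨⟨h1, h2⟩, h3⟩
        exact absurd h3 (ne_of_gt (hEpos k h1 h2))
      · rintro k ⟨⟨h1, h2⟩, h3⟩
        have hp := hEpos k h1 h2
        have h3' : -E k = 0 := h3
        linarith
    have hdisj : Disjoint ((Finset.Icc 1 N).image E) ((Finset.Icc 1 N).image (fun k => -E k)) := by
      rw [Finset.disjoint_left]
      rintro x hx hx'
      simp only [Finset.mem_image, Finset.mem_Icc] at hx hx'
      obtain ⟨k, ⟨h1, h2⟩, rfl⟩ := hx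
      obtain ⟨l, ⟨h3, h4⟩, h5⟩ := hx'
      have hp1 := hEpos k h1 h2
      have hp2 := hEpos l h3 h4
      have h5' : -E l = E k := h5
      linarith
    rw [Finset.card_insert_of_notMem h0, Finset.card_union_of_disjoint hdisj,
      Finset.card_image_of_injOn hEinj, Finset.card_image_of_injOn hEinj', Nat.card_Icc]
    omega


lemma ssh_exists_eigen (N : ℕ) (hN : 1 ≤ N) (δ : ℝ) (hδ1 : -1 < δ) (hδ2 : δ < 1)
    (H : Matrix (Fin (2 * N + 1)) (Fin (2 * N + 1)) ℝ)
    (hH : ∀ i j : Fin (2 * N + 1), H i j =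
      if (i : ℕ) + 1 = (j : ℕ) then (if Even (i : ℕ) then (1 + δ) / 2 else (1 - δ) / 2)
      else if (j : ℕ) + 1 = (i : ℕ) then (if Even (j : ℕ) then (1 + δ) / 2 else (1 - δ) / 2)
      else 0) (μ : ℝ)
    (hμ : μ = 0 ∨ ∃ k : ℕ, 1 ≤ k ∧ k ≤ N ∧
        (μ = Real.sqrt ((1 - δ ^ 2) / 2 * Real.cos (k * π / (N + 1)) + (1 + δ ^ 2) / 2) ∨
         μ = -Real.sqrt ((1 - δ ^ 2) / 2 * Real.cos (k * π / (N + 1)) + (1 + δ ^ 2) / 2))) :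
    ∃ v : Fin (2 * N + 1) → ℝ, v ≠ 0 ∧ H.mulVec v = μ • v := by
  have htm : ((1 - δ) / 2 : ℝ) ≠ 0 := by intro h; nlinarith
  rcases hμ with rfl | ⟨k, hk1, hk2, hk3⟩
  · refine ⟨fun i : Fin (2*N+1) => sshz ((1+δ)/2) ((1-δ)/2) (i:ℕ), ?_, ?_⟩
    · intro h
      have := congrFun h ⟨0, by omega⟩
      simp only [Pi.zero_apply] at this
      simp [sshz] at this
    · exact ssh_mulVec0 N ((1+δ)/2) ((1-δ)/2) htm H hH
  · set θ : ℝ := (k:ℝ) * π / ((N:ℝ) + 1) with hθ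
    have harg := ssh_arg_pos N δ hδ1 hδ2 k hk1 hk2
    have hμsq : μ ^ 2 = ((1+δ)/2)^2 + ((1-δ)/2)^2 + 2*((1+δ)/2)*((1-δ)/2)*Real.cos θ := by
      have h1 : μ ^ 2 = (1 - δ ^ 2) / 2 * Real.cos θ + (1 + δ ^ 2) / 2 := by
        rcases hk3 with rfl | rfl
        · exact Real.sq_sqrt (le_of_lt harg)
        · rw [neg_pow]
          simp [Real.sq_sqrt (le_of_lt harg)]
          exact Real.sq_sqrt (le_of_lt harg)
      rw [h1]; ring
    have hsin : Real.sin (((N:ℝ)+1) * θ) = 0 := by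
      have hN0 : ((N:ℝ)+1) ≠ 0 := by positivity
      rw [hθ, show ((N:ℝ)+1) * ((k:ℝ) * π / ((N:ℝ) + 1)) = (k:ℝ) * π from by field_simp]
      exact Real.sin_nat_mul_pi k
    have hsinθ : 0 < Real.sin θ := by
      obtain ⟨h1, h2⟩ := ssh_theta_mem N k hk1 hk2
      exact Real.sin_pos_of_pos_of_lt_pi h1 h2
    have hμne : μ ≠ 0 := by
      have hEpos : 0 < Real.sqrt ((1 - δ ^ 2) / 2 * Real.cos (k * π / (N + 1)) + (1 + δ ^ 2) / 2) :=
        Real.sqrt_pos.mpr harg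
      rcases hk3 with rfl | rfl
      · exact ne_of_gt hEpos
      · exact ne_of_lt (by linarith)
    refine ⟨fun i : Fin (2*N+1) => sshw ((1+δ)/2) ((1-δ)/2) θ μ (i:ℕ), ?_, ?_⟩
    · intro h
      have h2 := congrFun h ⟨1, by omega⟩
      simp only [Pi.zero_apply] at h2
      have h3 : sshw ((1+δ)/2) ((1-δ)/2) θ μ (2*0+1) = 0 := h2
      rw [sshw_odd] at h3
      rw [show (((0:ℕ):ℝ) + 1) = 1 from by norm_num, one_mul] at h3
      rcases mul_eq_zero.mp h3 with h' | h'
      · exact hμne h'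
      · exact absurd h' (ne_of_gt hsinθ)
    · exact ssh_mulVec N ((1+δ)/2) ((1-δ)/2) θ μ H hH hμsq hsin


/-- The SSH single-particle Hamiltonian on `2N+1` sites (0-based indexing):
zero diagonal, and the coupling between sites `j` and `j+1` equals `t⁺` if `j` is even
and `t⁻` if `j` is odd. Its spectrum consists exactly of `0` together with
`±√(((1−δ²)/2)cos(kπ/(N+1)) + (1+δ²)/2)` for `k = 1,…,N`, and these values are
pairwise distinct, giving all `2N+1` eigenvalues. -/
theorem ssh_spectrum (N : ℕ) (hN : 1 ≤ N) (δ : ℝ) (hδ1 : -1 < δ) (hδ2 : δ < 1)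
    (H : Matrix (Fin (2 * N + 1)) (Fin (2 * N + 1)) ℝ)
    (hH : ∀ i j : Fin (2 * N + 1), H i j =
      if (i : ℕ) + 1 = (j : ℕ) then (if Even (i : ℕ) then (1 + δ) / 2 else (1 - δ) / 2)
      else if (j : ℕ) + 1 = (i : ℕ) then (if Even (j : ℕ) then (1 + δ) / 2 else (1 - δ) / 2)
      else 0) :
    (∀ μ : ℝ, (∃ v : Fin (2 * N + 1) → ℝ, v ≠ 0 ∧ H.mulVec v = μ • v) ↔
      μ ∈ ({0} ∪ {μ : ℝ | ∃ k : ℕ, 1 ≤ k ∧ k ≤ N ∧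
        (μ = Real.sqrt ((1 - δ ^ 2) / 2 * Real.cos (k * π / (N + 1)) + (1 + δ ^ 2) / 2) ∨
         μ = -Real.sqrt ((1 - δ ^ 2) / 2 * Real.cos (k * π / (N + 1)) + (1 + δ ^ 2) / 2))} :
          Set ℝ)) ∧
    ({0} ∪ {μ : ℝ | ∃ k : ℕ, 1 ≤ k ∧ k ≤ N ∧
        (μ = Real.sqrt ((1 - δ ^ 2) / 2 * Real.cos (k * π / (N + 1)) + (1 + δ ^ 2) / 2) ∨
         μ = -Real.sqrt ((1 - δ ^ 2) / 2 * Real.cos (k * π / (N + 1)) + (1 + δ ^ 2) / 2))} :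
          Set ℝ).ncard = 2 * N + 1 := by
  classical
  set S : Set ℝ := ({0} ∪ {μ : ℝ | ∃ k : ℕ, 1 ≤ k ∧ k ≤ N ∧
        (μ = Real.sqrt ((1 - δ ^ 2) / 2 * Real.cos (k * π / (N + 1)) + (1 + δ ^ 2) / 2) ∨
         μ = -Real.sqrt ((1 - δ ^ 2) / 2 * Real.cos (k * π / (N + 1)) + (1 + δ ^ 2) / 2))} :
          Set ℝ) with hS
  obtain ⟨F, hSF, hFcard⟩ := ssh_card N hN δ hδ1 hδ2
  have hcard : S.ncard = 2 * N + 1 := by rw [hS, hSF, Set.ncard_coe_finset, hFcard]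
  have hmem : ∀ μ : ℝ, μ ∈ S ↔ (μ = 0 ∨ ∃ k : ℕ, 1 ≤ k ∧ k ≤ N ∧
        (μ = Real.sqrt ((1 - δ ^ 2) / 2 * Real.cos (k * π / (N + 1)) + (1 + δ ^ 2) / 2) ∨
         μ = -Real.sqrt ((1 - δ ^ 2) / 2 * Real.cos (k * π / (N + 1)) + (1 + δ ^ 2) / 2))) := by
    intro μ
    rw [hS]
    simp [Set.mem_union, Set.mem_singleton_iff, Set.mem_setOf_eq]
  refine ⟨?_, hcard⟩
  intro μ
  constructor
  · rintro ⟨v, hv0, hveq⟩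
    by_contra hμS
    have hfin : S.Finite := by rw [hS, hSF]; exact F.finite_toSet
    have hTfin : (insert μ S).Finite := hfin.insert μ
    have hall : ∀ ν : (insert μ S : Set ℝ), ∃ w : Fin (2 * N + 1) → ℝ,
        w ≠ 0 ∧ H.mulVec w = (ν : ℝ) • w := by
      rintro ⟨ν, hν⟩
      rcases Set.mem_insert_iff.mp hν with h | h
      · exact ⟨v, hv0, h ▸ hveq⟩
      · exact ssh_exists_eigen N hN δ hδ1 hδ2 H hH ν ((hmem ν).mp h)
    choose xs hxs1 hxs2 using hall
    have hli : LinearIndependent ℝ xs := by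
      apply Module.End.eigenvectors_linearIndependent (Matrix.mulVecLin H)
        (insert μ S) xs
      intro ν
      rw [Module.End.hasEigenvector_iff]
      refine ⟨Module.End.mem_eigenspace_iff.mpr ?_, hxs1 ν⟩
      rw [Matrix.mulVecLin_apply]
      exact hxs2 ν
    haveI := hTfin.fintype
    have hle := hli.fintype_card_le_finrank
    rw [Module.finrank_fin_fun] at hle
    have hcT : Fintype.card (insert μ S : Set ℝ) = 2 * N + 2 := by
      rw [← Nat.card_eq_fintype_card, Nat.card_coe_set_eq,
        Set.ncard_insert_of_notMem hμS hfin, hcard]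
    omega
  · intro hμ
    exact ssh_exists_eigen N hN δ hδ1 hδ2 H hH μ ((hmem μ).mp hμ)
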